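/- arXiv:1710.09177 — 2 statements merged into one kernel-verified Lean document; each statement's English description precedes it below -/
import Mathlib

section
/- For every 0 < α ≤ n and A > 0, the MISO capacity is upper-bounded by the SISO capacity: C_{h,σ²}(A, αA) ≤ C_{1,σ²}(s_n A, s_n A / 2). -/
open MeasureTheory ProbabilityTheory Real Filter
open scoped NNReal ENNReal Classical

noncomputable section

/-- Kullback–Leibler divergence (Mathlib's `ProbabilityTheory.klDiv`). -/
def klDiv {α : Type*} [MeasurableSpace α] (μ ν : Measure α) : EReal :=
  if μ ≪ ν ∧ Integrable (llr μ ν) μ then ((∫ x, llr μ ν x ∂μ : ℝ) : EReal) else ⊤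

/-- Mutual information of a joint law: KL divergence of the joint law from the
product of its marginals. -/
def mutualInfo {α β : Type*} [MeasurableSpace α] [MeasurableSpace β]
    (joint : Measure (α × β)) : EReal :=
  klDiv joint ((joint.map Prod.fst).prod (joint.map Prod.snd))

/-- Partial sums `s_k = h_1 + ⋯ + h_k`. -/
def sCum {n : ℕ} (h : Fin n → ℝ) (k : ℕ) : ℝ :=
  ∑ i : Fin n, if i.val < k then h i else 0

/-- Joint law of `(X, Y)` with `Y = hᵀX + Z`, `Z ~ N(0, v)` independent of `X`. -/
def misoJoint {n : ℕ} (h : Fin n → ℝ) (v : ℝ≥0) (μ : Measure (Fin n → ℝ)) :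
    Measure ((Fin n → ℝ) × ℝ) :=
  (μ.prod (gaussianReal 0 v)).map (fun p => (p.1, (∑ k, h k * p.1 k) + p.2))

/-- MISO capacity under peak-power constraint `A` and average-power constraint `E`. -/
def misoCapacity {n : ℕ} (h : Fin n → ℝ) (v : ℝ≥0) (A E : ℝ) : EReal :=
  ⨆ μ ∈ {μ : Measure (Fin n → ℝ) | IsProbabilityMeasure μ ∧
      (∀ k, ∀ᵐ x ∂μ, x k ∈ Set.Icc 0 A) ∧ (∑ k, ∫ x, x k ∂μ) ≤ E},
    mutualInfo (misoJoint h v μ)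

/-- MISO capacity under only an average-power constraint `E`. -/
def misoCapacityAvg {n : ℕ} (h : Fin n → ℝ) (v : ℝ≥0) (E : ℝ) : EReal :=
  ⨆ μ ∈ {μ : Measure (Fin n → ℝ) | IsProbabilityMeasure μ ∧
      (∀ k, ∀ᵐ x ∂μ, 0 ≤ x k) ∧ (∑ k, ∫ x, x k ∂μ) ≤ E},
    mutualInfo (misoJoint h v μ)

/-- Joint law of `(X̄, X̄ + Z)` for the unit-gain SISO channel. -/
def sisoJoint (v : ℝ≥0) (μ : Measure ℝ) : Measure (ℝ × ℝ) :=
  (μ.prod (gaussianReal 0 v)).map (fun p => (p.1, p.1 + p.2))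

/-- Unit-gain SISO capacity under peak-power constraint `A` and average-power
constraint `E`. -/
def sisoCapacity (v : ℝ≥0) (A E : ℝ) : EReal :=
  ⨆ μ ∈ {μ : Measure ℝ | IsProbabilityMeasure μ ∧
      (∀ᵐ x ∂μ, x ∈ Set.Icc 0 A) ∧ (∫ x, x ∂μ) ≤ E},
    mutualInfo (sisoJoint v μ)

/-- Unit-gain SISO capacity under only an average-power constraint `E`. -/
def sisoCapacityAvg (v : ℝ≥0) (E : ℝ) : EReal :=
  ⨆ μ ∈ {μ : Measure ℝ | IsProbabilityMeasure μ ∧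
      (∀ᵐ x ∂μ, 0 ≤ x) ∧ (∫ x, x ∂μ) ≤ E},
    mutualInfo (sisoJoint v μ)

/-- The interval `(s_{k-1} A, s_k A]` (with the first one being `[0, s_1 A]`)
corresponding to the event `U = k` (0-indexed: `k ∈ Fin n` stands for `k+1`). -/
def uInterval {n : ℕ} (h : Fin n → ℝ) (A : ℝ) (k : Fin n) : Set ℝ :=
  if k.val = 0 then Set.Icc 0 (sCum h 1 * A)
  else Set.Ioc (sCum h k.val * A) (sCum h (k.val + 1) * A)

/-- The average input power `∑_k p_k ((E[X̄ | U=k] - A s_{k-1})/h_k + (k-1) A)`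
consumed to generate a scalar law of `X̄`. -/
def avgPowerUse {n : ℕ} (h : Fin n → ℝ) (A : ℝ) (μ : Measure ℝ) : ℝ :=
  ∑ k : Fin n,
    (((∫ x in uInterval h A k, x ∂μ) - A * sCum h k.val * (μ (uInterval h A k)).toReal) / h k
      + (k.val : ℝ) * A * (μ (uInterval h A k)).toReal)

/-- The threshold `α_th`. -/
def alphaTh {n : ℕ} (h : Fin n → ℝ) : ℝ :=
  1 / 2 + (1 / sCum h n) * ∑ k : Fin n, h k * (k.val : ℝ)


end

noncomputable section Aux
namespace MisoAux
open MeasureTheory ProbabilityTheory Real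

variable {v : ℝ≥0}

/-- Density of `Y = X̄ + Z` w.r.t. Lebesgue. -/
def fY (ν : Measure ℝ) (v : ℝ≥0) (y : ℝ) : ℝ≥0∞ := ∫⁻ t, gaussianPDF 0 v (y - t) ∂ν

/-- Density of the SISO joint law w.r.t. the product of its marginals. -/
def gD (ν : Measure ℝ) (v : ℝ≥0) (p : ℝ × ℝ) : ℝ≥0∞ :=
  gaussianPDF 0 v (p.2 - p.1) / fY ν v p.2

/-- Law of `X̄ + Z`. -/
def PY (ν : Measure ℝ) (v : ℝ≥0) : Measure ℝ :=
  (ν.prod (gaussianReal 0 v)).map (fun p => p.1 + p.2)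

lemma measurable_fY (ν : Measure ℝ) [SFinite ν] (v : ℝ≥0) : Measurable (fY ν v) := by
  have : Measurable (fun p : ℝ × ℝ => gaussianPDF 0 v (p.1 - p.2)) :=
    (measurable_gaussianPDF 0 v).comp (measurable_fst.sub measurable_snd)
  exact this.lintegral_prod_right'

lemma measurable_gD (ν : Measure ℝ) [SFinite ν] (v : ℝ≥0) : Measurable (gD ν v) :=
  ((measurable_gaussianPDF 0 v).comp (measurable_snd.sub measurable_fst)).div
    ((measurable_fY ν v).comp measurable_snd)

instance (ν : Measure ℝ) [IsProbabilityMeasure ν] (v : ℝ≥0) : IsProbabilityMeasure (PY ν v) :=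
  Measure.isProbabilityMeasure_map (measurable_fst.add measurable_snd).aemeasurable

lemma gaussianPDF_le (v : ℝ≥0) (x : ℝ) :
    gaussianPDF 0 v x ≤ ENNReal.ofReal (Real.sqrt (2 * π * v))⁻¹ := by
  rw [gaussianPDF]
  apply ENNReal.ofReal_le_ofReal
  rw [gaussianPDFReal]
  nth_rewrite 2 [← mul_one ((Real.sqrt (2 * π * v))⁻¹)]
  gcongr
  apply Real.exp_le_one_iff.mpr
  apply div_nonpos_of_nonpos_of_nonneg
  · simp only [sub_zero]
    exact neg_nonpos.mpr (sq_nonneg _)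
  · positivity

lemma fY_pos (ν : Measure ℝ) [IsProbabilityMeasure ν] (hv : v ≠ 0) (y : ℝ) : 0 < fY ν v y := by
  rw [fY, pos_iff_ne_zero]
  intro h0
  rw [lintegral_eq_zero_iff
    (f := fun t => gaussianPDF 0 v (y - t))
    ((measurable_gaussianPDF 0 v).comp (measurable_const.sub measurable_id))] at h0
  haveI : (MeasureTheory.ae ν).NeBot := ae_neBot.mpr (IsProbabilityMeasure.ne_zero ν)
  obtain ⟨t, ht⟩ := h0.exists
  exact absurd ht (gaussianPDF_pos 0 hv _).ne'

lemma fY_ne_top (ν : Measure ℝ) [IsProbabilityMeasure ν] (y : ℝ) : fY ν v y ≠ ∞ := by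
  have h1 : fY ν v y ≤ ENNReal.ofReal (Real.sqrt (2 * π * v))⁻¹ := by
    calc fY ν v y ≤ ∫⁻ _, ENNReal.ofReal (Real.sqrt (2 * π * v))⁻¹ ∂ν :=
          lintegral_mono fun t => gaussianPDF_le v _
    _ = ENNReal.ofReal (Real.sqrt (2 * π * v))⁻¹ := by simp
  exact ne_top_of_le_ne_top ENNReal.ofReal_ne_top h1

lemma gaussianPDF_sub_eq (t y : ℝ) : gaussianPDF 0 v (y - t) = gaussianPDF t v y := by
  rw [gaussianPDF, gaussianPDF, gaussianPDFReal_sub, zero_add]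

lemma gaussianPDF_neg (x : ℝ) : gaussianPDF 0 v (-x) = gaussianPDF 0 v x := by
  rw [gaussianPDF, gaussianPDF]
  congr 1
  simp [gaussianPDFReal, neg_sq]

lemma PY_eq (ν : Measure ℝ) [IsProbabilityMeasure ν] (hv : v ≠ 0) :
    PY ν v = volume.withDensity (fY ν v) := by
  ext s hs
  have hadd : Measurable (fun p : ℝ × ℝ => p.1 + p.2) := measurable_fst.add measurable_snd
  rw [PY, Measure.map_apply hadd hs, Measure.prod_apply (hadd hs)]
  have h1 : ∀ t : ℝ, (gaussianReal 0 v) (Prod.mk t ⁻¹' ((fun p : ℝ × ℝ => p.1 + p.2) ⁻¹' s))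
      = ∫⁻ y, s.indicator 1 y * gaussianPDF 0 v (y - t) := by
    intro t
    have he : Prod.mk t ⁻¹' ((fun p : ℝ × ℝ => p.1 + p.2) ⁻¹' s) = (fun z => t + z) ⁻¹' s := rfl
    rw [he, ← Measure.map_apply (measurable_const_add t) hs, gaussianReal_map_const_add,
      zero_add, gaussianReal_apply _ hv, ← lintegral_indicator hs _]
    congr 1
    funext y
    by_cases hy : y ∈ s <;> simp [hy, gaussianPDF_sub_eq]
  simp_rw [h1]
  rw [withDensity_apply _ hs, ← lintegral_indicator hs _]
  have hswap : ∫⁻ t, ∫⁻ y, s.indicator 1 y * gaussianPDF 0 v (y - t) ∂volume ∂ν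
      = ∫⁻ y, ∫⁻ t, s.indicator 1 y * gaussianPDF 0 v (y - t) ∂ν ∂volume := by
    apply lintegral_lintegral_swap
    apply Measurable.aemeasurable
    exact ((measurable_one.indicator hs).comp measurable_snd).mul
      ((measurable_gaussianPDF 0 v).comp (measurable_snd.sub measurable_fst))
  rw [hswap]
  congr 1
  funext y
  by_cases hy : y ∈ s <;> simp [hy, fY]

theorem joint_eq_withDensity {α : Type*} [MeasurableSpace α] (μ : Measure α)
    [IsProbabilityMeasure μ] {c : α → ℝ} (hc : Measurable c) (hv : v ≠ 0) :
    (μ.prod (gaussianReal 0 v)).map (fun p => (p.1, c p.1 + p.2))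
      = (μ.prod (PY (μ.map c) v)).withDensity (fun p => gD (μ.map c) v (c p.1, p.2)) := by
  set ν := μ.map c with hν
  haveI : IsProbabilityMeasure ν := Measure.isProbabilityMeasure_map hc.aemeasurable
  have hmap : Measurable (fun p : α × ℝ => (p.1, c p.1 + p.2)) :=
    measurable_fst.prodMk ((hc.comp measurable_fst).add measurable_snd)
  ext B hB
  rw [Measure.map_apply hmap hB, Measure.prod_apply (hmap hB)]
  have hL : ∀ x, (gaussianReal 0 v) (Prod.mk x ⁻¹' ((fun p : α × ℝ => (p.1, c p.1 + p.2)) ⁻¹' B))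
      = ∫⁻ y, B.indicator 1 (x, y) * gaussianPDF 0 v (y - c x) := by
    intro x
    have hBx : MeasurableSet {y : ℝ | (x, y) ∈ B} := measurable_prodMk_left hB
    have he : Prod.mk x ⁻¹' ((fun p : α × ℝ => (p.1, c p.1 + p.2)) ⁻¹' B)
        = (fun z => c x + z) ⁻¹' {y : ℝ | (x, y) ∈ B} := rfl
    rw [he, ← Measure.map_apply (measurable_const_add (c x)) hBx, gaussianReal_map_const_add,
      zero_add, gaussianReal_apply _ hv, ← lintegral_indicator hBx _]
    congr 1
    funext y
    by_cases hy : (x, y) ∈ B <;> simp [hy, gaussianPDF_sub_eq, Set.indicator]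
  simp_rw [hL]
  have hGc : Measurable (fun p : α × ℝ => gD ν v (c p.1, p.2)) :=
    (measurable_gD ν v).comp ((hc.comp measurable_fst).prodMk measurable_snd)
  rw [withDensity_apply _ hB, ← lintegral_indicator hB _,
    lintegral_prod _ (hGc.indicator hB).aemeasurable]
  congr 1
  funext x
  have hGx : Measurable (fun y : ℝ => B.indicator (fun p : α × ℝ => gD ν v (c p.1, p.2)) (x, y)) :=
    (hGc.indicator hB).comp measurable_prodMk_left
  rw [PY_eq ν hv, lintegral_withDensity_eq_lintegral_mul _ (measurable_fY ν v) hGx]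
  congr 1
  funext y
  by_cases hy : (x, y) ∈ B
  · have : B.indicator (fun p : α × ℝ => gD ν v (c p.1, p.2)) (x, y) = gD ν v (c x, y) :=
      Set.indicator_of_mem hy _
    simp only [Pi.mul_apply, this, Set.indicator_of_mem hy]
    rw [gD]
    simp only [Pi.one_apply, one_mul]
    rw [ENNReal.mul_div_cancel (fY_pos ν hv y).ne' (fY_ne_top ν y)]
  · simp [Set.indicator_of_notMem hy]

section Marginals

variable {α : Type*} [MeasurableSpace α] (μ : Measure α) [IsProbabilityMeasure μ]
  {c : α → ℝ}

lemma hmap_meas (hc : Measurable c) : Measurable (fun p : α × ℝ => (p.1, c p.1 + p.2)) :=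
  measurable_fst.prodMk ((hc.comp measurable_fst).add measurable_snd)

lemma joint_map_fst (hc : Measurable c) :
    ((μ.prod (gaussianReal 0 v)).map (fun p => (p.1, c p.1 + p.2))).map Prod.fst = μ := by
  rw [Measure.map_map measurable_fst (hmap_meas hc)]
  have he : (Prod.fst ∘ fun p : α × ℝ => (p.1, c p.1 + p.2)) = Prod.fst := rfl
  rw [he, Measure.map_fst_prod]
  simp

lemma joint_map_snd (hc : Measurable c) :
    ((μ.prod (gaussianReal 0 v)).map (fun p => (p.1, c p.1 + p.2))).map Prod.snd
      = PY (μ.map c) v := by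
  rw [Measure.map_map measurable_snd (hmap_meas hc)]
  have he : (Prod.snd ∘ fun p : α × ℝ => (p.1, c p.1 + p.2))
      = (fun p : ℝ × ℝ => p.1 + p.2) ∘ (Prod.map c id) := rfl
  rw [he, ← Measure.map_map (g := fun p : ℝ × ℝ => p.1 + p.2) (measurable_fst.add measurable_snd) (hc.prodMap measurable_id),
    ← Measure.map_prod_map _ _ hc measurable_id, Measure.map_id]
  rfl

lemma joint_map_T (hc : Measurable c) :
    ((μ.prod (gaussianReal 0 v)).map (fun p => (p.1, c p.1 + p.2))).map
        (fun p : α × ℝ => (c p.1, p.2))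
      = sisoJoint v (μ.map c) := by
  have hT : Measurable (fun p : α × ℝ => (c p.1, p.2)) :=
    (hc.comp measurable_fst).prodMk measurable_snd
  rw [Measure.map_map hT (hmap_meas hc), sisoJoint]
  have he : ((fun p : α × ℝ => (c p.1, p.2)) ∘ fun p : α × ℝ => (p.1, c p.1 + p.2))
      = (fun p : ℝ × ℝ => (p.1, p.1 + p.2)) ∘ (Prod.map c id) := rfl
  rw [he, ← Measure.map_map (measurable_fst.prodMk (measurable_fst.add measurable_snd) :
      Measurable (fun p : ℝ × ℝ => (p.1, p.1 + p.2)))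
    (hc.prodMap measurable_id), ← Measure.map_prod_map _ _ hc measurable_id, Measure.map_id]

end Marginals

lemma joint_eq_withDensity_id (ν : Measure ℝ) [IsProbabilityMeasure ν] (hv : v ≠ 0) :
    sisoJoint v ν = (ν.prod (PY ν v)).withDensity (gD ν v) := by
  have h := joint_eq_withDensity (v := v) ν measurable_id hv
  rw [Measure.map_id] at h
  exact h

lemma siso_map_fst (ν : Measure ℝ) [IsProbabilityMeasure ν] :
    (sisoJoint v ν).map Prod.fst = ν :=
  joint_map_fst (v := v) ν measurable_id

lemma siso_map_snd (ν : Measure ℝ) [IsProbabilityMeasure ν] :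
    (sisoJoint v ν).map Prod.snd = PY ν v := by
  have h := joint_map_snd (v := v) ν measurable_id
  rw [Measure.map_id] at h
  exact h

theorem klDiv_withDensity {β : Type*} [MeasurableSpace β] (pm : Measure β) [SigmaFinite pm]
    {g : β → ℝ≥0∞} (hg : Measurable g) :
    klDiv (pm.withDensity g) pm =
      if Integrable (fun x => Real.log (g x).toReal) (pm.withDensity g)
      then (((∫ x, Real.log (g x).toReal ∂(pm.withDensity g)) : ℝ) : EReal) else ⊤ := by
  have hac : pm.withDensity g ≪ pm := withDensity_absolutelyContinuous _ _
  have hrn : (pm.withDensity g).rnDeriv pm =ᵐ[pm] g := Measure.rnDeriv_withDensity pm hg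
  have hllr : llr (pm.withDensity g) pm =ᵐ[pm.withDensity g] fun x => Real.log (g x).toReal := by
    filter_upwards [hac.ae_le hrn] with x hx
    simp only [llr_def]
    rw [hx]
  rw [_root_.klDiv]
  by_cases hI : Integrable (fun x => Real.log (g x).toReal) (pm.withDensity g)
  · rw [if_pos ⟨hac, (integrable_congr hllr).mpr hI⟩, if_pos hI, integral_congr_ae hllr]
  · rw [if_neg, if_neg hI]
    rintro ⟨-, hInt⟩
    exact hI ((integrable_congr hllr).mp hInt)

theorem klDiv_map_eq {β γ : Type*} [MeasurableSpace β] [MeasurableSpace γ]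
    {π₁ : Measure β} {π₂ : Measure γ} [SigmaFinite π₁] [SigmaFinite π₂]
    {T : β → γ} (hT : Measurable T) {g : γ → ℝ≥0∞} (hg : Measurable g)
    {ρ₁ : Measure β} {ρ₂ : Measure γ}
    (h₁ : ρ₁ = π₁.withDensity (fun a => g (T a)))
    (h₂ : ρ₂ = π₂.withDensity g) (hmap : ρ₂ = ρ₁.map T) :
    klDiv ρ₁ π₁ = klDiv ρ₂ π₂ := by
  have hmeas : Measurable (fun b : γ => Real.log (g b).toReal) :=
    Real.measurable_log.comp hg.ennreal_toReal
  have hmap' : π₂.withDensity g = ρ₁.map T := by rw [← h₂, hmap]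
  have hgT : Measurable (fun a => g (T a)) := hg.comp hT
  rw [h₁, h₂, klDiv_withDensity π₁ hgT, klDiv_withDensity π₂ hg, hmap', ← h₁]
  have hint : Integrable (fun b => Real.log (g b).toReal) (ρ₁.map T)
      ↔ Integrable (fun a => Real.log (g (T a)).toReal) ρ₁ := by
    rw [integrable_map_measure hmeas.aestronglyMeasurable hT.aemeasurable]
    exact Iff.rfl
  by_cases hI : Integrable (fun a => Real.log (g (T a)).toReal) ρ₁
  · rw [if_pos hI, if_pos (hint.mpr hI), integral_map hT.aemeasurable hmeas.aestronglyMeasurable]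
  · rw [if_neg hI, if_neg (fun hh => hI (hint.mp hh))]

theorem mutualInfo_channel {α : Type*} [MeasurableSpace α] (μ : Measure α)
    [IsProbabilityMeasure μ] {c : α → ℝ} (hc : Measurable c) (hv : v ≠ 0) :
    mutualInfo ((μ.prod (gaussianReal 0 v)).map (fun p => (p.1, c p.1 + p.2)))
      = mutualInfo (sisoJoint v (μ.map c)) := by
  set ν := μ.map c with hν
  haveI : IsProbabilityMeasure ν := Measure.isProbabilityMeasure_map hc.aemeasurable
  rw [mutualInfo, mutualInfo, joint_map_fst μ hc, joint_map_snd μ hc, ← hν,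
    siso_map_fst ν, siso_map_snd ν]
  refine klDiv_map_eq (π₁ := μ.prod (PY ν v)) (π₂ := ν.prod (PY ν v))
    (T := fun p : α × ℝ => (c p.1, p.2))
    ((hc.comp measurable_fst).prodMk measurable_snd) (measurable_gD ν v) ?_ ?_ ?_
  · exact joint_eq_withDensity μ hc hv
  · exact joint_eq_withDensity_id ν hv
  · exact (joint_map_T μ hc).symm

lemma gaussianReal_map_neg' (v : ℝ≥0) :
    (gaussianReal (0 : ℝ) v).map (fun x => -x) = gaussianReal 0 v := by
  have h1 : (fun x : ℝ => -x) = fun x : ℝ => (-1 : ℝ) * x := by funext x; ring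
  rw [h1, gaussianReal_map_const_mul]
  congr 1
  · norm_num
  · ext
    push_cast
    norm_num

lemma fY_reflect (ν : Measure ℝ) [IsProbabilityMeasure ν] (A' y : ℝ) :
    fY (ν.map (fun x => A' - x)) v (A' - y) = fY ν v y := by
  have hsub : Measurable (fun x : ℝ => A' - x) := measurable_const.sub measurable_id
  have hf : Measurable (fun t : ℝ => gaussianPDF 0 v (A' - y - t)) :=
    (measurable_gaussianPDF 0 v).comp (measurable_const.sub measurable_id)
  rw [fY, lintegral_map hf hsub, fY]
  congr 1
  funext s
  have he : A' - y - (A' - s) = -(y - s) := by ring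
  rw [he, gaussianPDF_neg]

lemma gD_reflect (ν : Measure ℝ) [IsProbabilityMeasure ν] (A' : ℝ) (p : ℝ × ℝ) :
    gD (ν.map (fun x => A' - x)) v (A' - p.1, A' - p.2) = gD ν v p := by
  rw [gD, gD]
  have he : A' - p.2 - (A' - p.1) = -(p.2 - p.1) := by ring
  rw [he, gaussianPDF_neg, fY_reflect]

lemma siso_map_reflect (ν : Measure ℝ) [IsProbabilityMeasure ν] (A' : ℝ) :
    (sisoJoint v ν).map (fun p : ℝ × ℝ => (A' - p.1, A' - p.2))
      = sisoJoint v (ν.map (fun x => A' - x)) := by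
  have hE : Measurable (fun p : ℝ × ℝ => (A' - p.1, A' - p.2)) :=
    (measurable_const.sub measurable_fst).prodMk (measurable_const.sub measurable_snd)
  have hj : Measurable (fun p : ℝ × ℝ => (p.1, p.1 + p.2)) :=
    measurable_fst.prodMk (measurable_fst.add measurable_snd)
  rw [sisoJoint, Measure.map_map hE hj]
  have he : ((fun p : ℝ × ℝ => (A' - p.1, A' - p.2)) ∘ fun p : ℝ × ℝ => (p.1, p.1 + p.2))
      = (fun p : ℝ × ℝ => (p.1, p.1 + p.2)) ∘ (Prod.map (fun x => A' - x) (fun z : ℝ => -z)) := by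
    funext p
    refine Prod.ext rfl ?_
    simp only [Function.comp_apply, Prod.map, Prod.snd]
    ring
  have hsub : Measurable (fun x : ℝ => A' - x) := measurable_const.sub measurable_id
  have hneg : Measurable (fun z : ℝ => -z) := measurable_neg
  have hpm : Measurable (Prod.map (fun x : ℝ => A' - x) (fun z : ℝ => -z)) :=
    hsub.prodMap hneg
  rw [he, ← Measure.map_map hj hpm, ← Measure.map_prod_map _ _ hsub hneg,
    gaussianReal_map_neg', sisoJoint]

theorem mutualInfo_reflect (ν : Measure ℝ) [IsProbabilityMeasure ν] (hv : v ≠ 0) (A' : ℝ) :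
    mutualInfo (sisoJoint v ν) = mutualInfo (sisoJoint v (ν.map (fun x => A' - x))) := by
  set ν' := ν.map (fun x => A' - x) with hν'
  haveI : IsProbabilityMeasure ν' :=
    Measure.isProbabilityMeasure_map (measurable_const.sub measurable_id).aemeasurable
  rw [mutualInfo, mutualInfo, siso_map_fst ν, siso_map_snd ν, siso_map_fst ν', siso_map_snd ν']
  refine klDiv_map_eq (π₁ := ν.prod (PY ν v)) (π₂ := ν'.prod (PY ν' v))
    (T := fun p : ℝ × ℝ => (A' - p.1, A' - p.2))
    ((measurable_const.sub measurable_fst).prodMk (measurable_const.sub measurable_snd))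
    (measurable_gD ν' v) ?_ ?_ ?_
  · have hgE : (fun p : ℝ × ℝ => gD ν' v (A' - p.1, A' - p.2)) = gD ν v :=
      funext fun p => gD_reflect ν A' p
    rw [hgE]
    exact joint_eq_withDensity_id ν hv
  · exact joint_eq_withDensity_id ν' hv
  · exact (siso_map_reflect ν A').symm

end MisoAux
end Aux

theorem miso_capacity_le_siso_capacity (n : ℕ) (hn : 2 ≤ n) (h : Fin n → ℝ)
    (hord : ∀ i j : Fin n, i ≤ j → h j ≤ h i) (hpos : ∀ k, 0 < h k)
    (v : ℝ≥0) (hv : 0 < v)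
    (A α : ℝ) (hA : 0 < A) (hα0 : 0 < α) (hαn : α ≤ (n : ℝ)) :
    misoCapacity h v A (α * A)
      ≤ sisoCapacity v (sCum h n * A) (sCum h n * A / 2) := by
  classical
  have hv0 : v ≠ 0 := hv.ne'
  haveI : Nonempty (Fin n) := ⟨⟨0, by omega⟩⟩
  have hsum : sCum h n = ∑ i, h i := Finset.sum_congr rfl fun i _ => if_pos i.isLt
  have hspos : 0 < sCum h n := by
    rw [hsum]; exact Finset.sum_pos (fun i _ => hpos i) Finset.univ_nonempty
  rw [misoCapacity, sisoCapacity]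
  refine iSup₂_le fun μ hμ => ?_
  obtain ⟨hprob, hpeak, -⟩ := hμ
  haveI := hprob
  set c : (Fin n → ℝ) → ℝ := fun x => ∑ k, h k * x k with hc_def
  have hc : Measurable c :=
    Finset.measurable_sum _ (fun k _ => by fun_prop)
  set ν := μ.map c with hν
  haveI : IsProbabilityMeasure ν := Measure.isProbabilityMeasure_map hc.aemeasurable
  have step1 : mutualInfo (misoJoint h v μ) = mutualInfo (sisoJoint v ν) :=
    MisoAux.mutualInfo_channel μ hc hv0
  have hall : ∀ᵐ x ∂μ, ∀ k, x k ∈ Set.Icc 0 A := ae_all_iff.mpr hpeak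
  have hcc : ∀ᵐ x ∂μ, c x ∈ Set.Icc 0 (sCum h n * A) := by
    filter_upwards [hall] with x hx
    constructor
    · exact Finset.sum_nonneg fun k _ => mul_nonneg (hpos k).le (hx k).1
    · calc ∑ k, h k * x k ≤ ∑ k, h k * A :=
          Finset.sum_le_sum fun k _ => mul_le_mul_of_nonneg_left (hx k).2 (hpos k).le
      _ = sCum h n * A := by rw [hsum, Finset.sum_mul]
  have hsupp : ∀ᵐ y ∂ν, y ∈ Set.Icc 0 (sCum h n * A) :=
    (ae_map_iff hc.aemeasurable measurableSet_Icc).mpr hcc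
  have hCA : 0 < sCum h n * A := mul_pos hspos hA
  have hint : Integrable (fun y : ℝ => y) ν := by
    refine Integrable.mono' (integrable_const (sCum h n * A)) aestronglyMeasurable_id ?_
    filter_upwards [hsupp] with y hy
    rw [Real.norm_eq_abs, abs_le]
    exact ⟨by linarith [hy.1, hCA], hy.2⟩
  by_cases hm : (∫ y, y ∂ν) ≤ sCum h n * A / 2
  · rw [step1]
    exact le_iSup₂_of_le ν ⟨inferInstance, hsupp, hm⟩ le_rfl
  · set ν' := ν.map (fun y => sCum h n * A - y) with hν'
    have hrm : Measurable (fun y : ℝ => sCum h n * A - y) := measurable_const.sub measurable_id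
    haveI : IsProbabilityMeasure ν' := Measure.isProbabilityMeasure_map hrm.aemeasurable
    have hsupp' : ∀ᵐ y ∂ν', y ∈ Set.Icc 0 (sCum h n * A) := by
      rw [hν']
      refine (ae_map_iff hrm.aemeasurable measurableSet_Icc).mpr ?_
      filter_upwards [hsupp] with y hy
      exact ⟨by linarith [hy.2], by linarith [hy.1]⟩
    have hmean' : (∫ y, y ∂ν') ≤ sCum h n * A / 2 := by
      have h1 : (∫ y, y ∂ν') = ∫ y, (sCum h n * A - y) ∂ν := by
        rw [hν']
        exact integral_map hrm.aemeasurable aestronglyMeasurable_id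
      have h2 : ∫ y, (sCum h n * A - y) ∂ν = sCum h n * A - ∫ y, y ∂ν := by
        rw [integral_sub (integrable_const _) hint, integral_const]
        simp
      rw [h1, h2]
      linarith [not_le.mp hm]
    rw [step1, MisoAux.mutualInfo_reflect ν hv0 (sCum h n * A)]
    exact le_iSup₂_of_le ν' ⟨inferInstance, hsupp', hmean'⟩ le_rfl
end

section
/- Let f_X̄ be the piecewise density on [0, s_n A] defined by f_X̄(x) = (p_k/(h_k A))·(μ/(1 − e^{−μ}))·e^{−μ(x − s_{k−1}A)/(h_k A)} for x ∈ (s_{k−1}A, s_k A], k = 1,…,n. Then f_X̄ is a probability density on [0, s_n A] and its differential entropy satisfies −∫₀^{s_n A} f_X̄(x)·log f_X̄(x) dx = −∑_{k=1}^n p_k·log( p_k s_n / h_k ) + log(s_n A) − log( μ/(1 − e^{−μ}) ) + 1 − μ e^{−μ}/(1 − e^{−μ}). -/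
open MeasureTheory ProbabilityTheory Real Filter
open scoped NNReal ENNReal Classical

noncomputable section

/-- The piecewise truncated-exponential density on `[0, s_n A]`: on the `k`-th
interval `(s_{k-1}A, s_k A]` it equals
`(p_k/(h_k A)) (m/(1-e^{-m})) e^{-m (x - s_{k-1}A)/(h_k A)}`. -/
def truncExpPiecewise {n : ℕ} (h : Fin n → ℝ) (A m : ℝ) (p : Fin n → ℝ) (x : ℝ) : ℝ :=
  ∑ k : Fin n, (uInterval h A k).indicator
    (fun y => p k / (h k * A) * (m / (1 - Real.exp (-m))) *
      Real.exp (-(m * (y - sCum h k.val * A) / (h k * A)))) x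

end

section helpers
variable {n : ℕ} {h : Fin n → ℝ}

lemma sCum_zero : sCum h 0 = 0 := by simp [sCum]

lemma sCum_succ (k : Fin n) : sCum h (k.val + 1) = sCum h k.val + h k := by
  unfold sCum
  have hterm : ∀ i : Fin n, (if i.val < k.val + 1 then h i else 0)
      = (if i.val < k.val then h i else 0) + (if i = k then h i else 0) := by
    intro i
    by_cases hik : i = k
    · subst hik; simp
    · have : i.val ≠ k.val := fun e => hik (Fin.ext e)
      by_cases hlt : i.val < k.val
      · simp [hik, hlt, Nat.lt_succ_of_lt hlt]
      · have h2 : ¬ i.val < k.val + 1 := by omega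
        simp [hik, hlt, h2]
  rw [Finset.sum_congr rfl (fun i _ => hterm i), Finset.sum_add_distrib,
    Finset.sum_ite_eq' Finset.univ k h]
  simp

lemma sCum_mono (hpos : ∀ k, 0 < h k) {k l : ℕ} (hkl : k ≤ l) : sCum h k ≤ sCum h l := by
  apply Finset.sum_le_sum
  intro i _
  by_cases hik : i.val < k
  · simp [hik, lt_of_lt_of_le hik hkl]
  · by_cases hil : i.val < l
    · simp [hik, hil, (hpos i).le]
    · simp [hik, hil]

lemma sCum_pos (hpos : ∀ k, 0 < h k) {k : ℕ} (hk : 0 < k) (hn : 0 < n) : 0 < sCum h k := by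
  have h1 : sCum h 1 ≤ sCum h k := sCum_mono hpos hk
  have h2 : sCum h 1 = h ⟨0, hn⟩ := by
    have := sCum_succ (h := h) ⟨0, hn⟩
    simpa [sCum_zero] using this
  linarith [hpos ⟨0, hn⟩]

lemma ftc_exp (a L c r : ℝ) (hr : r ≠ 0) :
    ∫ x in a..(a+L), c * Real.exp (-(r * (x - a)))
      = c / r * (1 - Real.exp (-(r * L))) := by
  have key : ∀ x ∈ Set.uIcc a (a+L),
      HasDerivAt (fun y => -(c/r) * Real.exp (-(r * (y - a))))
        (c * Real.exp (-(r * (x - a)))) x := by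
    intro x _
    have h1 : HasDerivAt (fun y : ℝ => -(r * (y - a))) (-r) x := by
      have := (((hasDerivAt_id' x).sub_const a).const_mul r).neg
      exact this.congr_deriv (by ring)
    have h2 := (h1.exp).const_mul (-(c/r))
    refine h2.congr_deriv ?_
    field_simp
  rw [intervalIntegral.integral_eq_sub_of_hasDerivAt key (by
    apply Continuous.intervalIntegrable; continuity)]
  simp only [sub_self, mul_zero, neg_zero, Real.exp_zero]
  field_simp
  ring

lemma ftc_exp_mul (a L c r b : ℝ) (hr : r ≠ 0) :
    ∫ x in a..(a+L), c * Real.exp (-(r * (x - a))) * (b - r * (x - a))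
      = c / r * ((b - 1) - Real.exp (-(r * L)) * (b - r * L - 1)) := by
  have key : ∀ x ∈ Set.uIcc a (a+L),
      HasDerivAt (fun y => -(c/r) * Real.exp (-(r * (y - a))) * (b - r * (y - a) - 1))
        (c * Real.exp (-(r * (x - a))) * (b - r * (x - a))) x := by
    intro x _
    have h1 : HasDerivAt (fun y : ℝ => -(r * (y - a))) (-r) x := by
      have := (((hasDerivAt_id' x).sub_const a).const_mul r).neg
      exact this.congr_deriv (by ring)
    have h2 : HasDerivAt (fun y : ℝ => Real.exp (-(r * (y - a)))) (Real.exp (-(r * (x-a))) * (-r)) x := h1.exp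
    have h3 : HasDerivAt (fun y : ℝ => b - r * (y - a) - 1) (-r) x := by
      have := ((((hasDerivAt_id' x).sub_const a).const_mul r).const_sub b).sub_const 1
      exact this.congr_deriv (by ring)
    have h4 := ((h2.const_mul (-(c/r))).mul h3)
    refine h4.congr_deriv ?_
    field_simp
    ring
  rw [intervalIntegral.integral_eq_sub_of_hasDerivAt key (by
    apply Continuous.intervalIntegrable; continuity)]
  simp only [sub_self, mul_zero, neg_zero, Real.exp_zero]
  field_simp
  ring

end helpers

theorem piecewise_density_entropy (n : ℕ) (hn : 2 ≤ n) (h : Fin n → ℝ)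
    (hord : ∀ i j : Fin n, i ≤ j → h j ≤ h i) (hpos : ∀ k, 0 < h k)
    (A m : ℝ) (hA : 0 < A) (hm : 0 < m)
    (p : Fin n → ℝ) (hppos : ∀ k, 0 < p k) (hpsum : (∑ k, p k) = 1) :
    (∫ x in Set.Icc 0 (sCum h n * A), truncExpPiecewise h A m p x) = 1 ∧
    (-∫ x in Set.Icc 0 (sCum h n * A),
        truncExpPiecewise h A m p x * Real.log (truncExpPiecewise h A m p x))
      = -(∑ k : Fin n, p k * Real.log (p k * sCum h n / h k))
        + Real.log (sCum h n * A) - Real.log (m / (1 - Real.exp (-m)))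
        + 1 - m * Real.exp (-m) / (1 - Real.exp (-m)) := by
  have hnpos : 0 < n := by omega
  have hem : 0 < 1 - Real.exp (-m) := by
    have : Real.exp (-m) < 1 := Real.exp_lt_one_iff.mpr (by linarith)
    linarith
  have hSpos : 0 < sCum h n := sCum_pos hpos hnpos hnpos
  set a : ℕ → ℝ := fun i => sCum h i * A with ha
  set c : Fin n → ℝ := fun k => p k / (h k * A) * (m / (1 - Real.exp (-m))) with hc
  set r : Fin n → ℝ := fun k => m / (h k * A) with hr
  have hLpos : ∀ k : Fin n, 0 < h k * A := fun k => mul_pos (hpos k) hA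
  have hrpos : ∀ k : Fin n, 0 < r k := fun k => div_pos hm (hLpos k)
  have hcpos : ∀ k : Fin n, 0 < c k :=
    fun k => mul_pos (div_pos (hppos k) (hLpos k)) (div_pos hm hem)
  have hstep : ∀ k : Fin n, a (k.val + 1) = a k.val + h k * A := by
    intro k; simp only [ha]; rw [sCum_succ]; ring
  have hamono : ∀ {i j : ℕ}, i ≤ j → a i ≤ a j :=
    fun {i j} hij => mul_le_mul_of_nonneg_right (sCum_mono hpos hij) hA.le
  have ha0 : a 0 = 0 := by simp [ha, sCum_zero]
  have hrL : ∀ k : Fin n, r k * (h k * A) = m := by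
    intro k; simp only [hr]; field_simp [(hLpos k).ne', (hpos k).ne']
  have hcr : ∀ k : Fin n, c k / r k = p k / (1 - Real.exp (-m)) := by
    intro k
    have hck : c k = p k / (1 - Real.exp (-m)) * r k := by
      simp only [hc, hr]
      field_simp
    rw [hck, mul_div_assoc, div_self (hrpos k).ne', mul_one]
  -- pointwise value on each Ioc piece
  have hval : ∀ (i : Fin n) (x : ℝ), x ∈ Set.Ioc (a i.val) (a (i.val + 1)) →
      truncExpPiecewise h A m p x = c i * Real.exp (-(r i * (x - a i.val))) := by
    intro i x hx
    unfold truncExpPiecewise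
    rw [Finset.sum_eq_single i]
    · have hxin : x ∈ uInterval h A i := by
        unfold uInterval
        by_cases hi0 : i.val = 0
        · rw [if_pos hi0]
          constructor
          · have : a i.val = 0 := by rw [hi0, ha0]
            have := hx.1; linarith
          · have := hx.2
            have h1 : a (i.val + 1) = sCum h 1 * A := by rw [hi0]
            linarith [h1 ▸ hx.2]
        · rw [if_neg hi0]; exact hx
      rw [Set.indicator_of_mem hxin]
      congr 2
      rw [hr]
      field_simp
      rfl
    · intro j _ hji
      apply Set.indicator_of_notMem
      rcases lt_or_gt_of_ne (fun e => hji (Fin.ext e)) with hlt | hgt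
      · -- j.val < i.val : everything in uInterval j is ≤ a (j.val+1) ≤ a i.val < x
        have hub : a (j.val + 1) ≤ a i.val := hamono (by omega)
        intro hxj
        have hxle : x ≤ a (j.val + 1) := by
          unfold uInterval at hxj
          by_cases hj0 : j.val = 0
          · rw [if_pos hj0] at hxj
            have : a (j.val + 1) = sCum h 1 * A := by rw [hj0]
            linarith [hxj.2]
          · rw [if_neg hj0] at hxj
            exact hxj.2
        linarith [hx.1]
      · -- i.val < j.val : everything in uInterval j is > a j.val ≥ a (i.val+1) ≥ x
        have hj0 : j.val ≠ 0 := by omega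
        have hub : a (i.val + 1) ≤ a j.val := hamono (by omega)
        intro hxj
        unfold uInterval at hxj
        rw [if_neg hj0] at hxj
        have e1 : sCum h ↑j * A = a ↑j := rfl
        have := hxj.1
        rw [e1] at this
        linarith [hx.2]
    · intro hi
      exact absurd (Finset.mem_univ i) hi
  -- integrability pieces and splitting
  have hle : ∀ i : Fin n, a i.val ≤ a (i.val + 1) := fun i => hamono (Nat.le_succ _)
  have hsplit : ∀ g : ℝ → ℝ,
      (∀ i : Fin n, IntervalIntegrable g volume (a i.val) (a (i.val + 1))) →
      (∫ x in Set.Icc 0 (sCum h n * A), g x)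
        = ∑ i : Fin n, ∫ x in (a i.val)..(a (i.val + 1)), g x := by
    intro g hg
    have hsum := intervalIntegral.sum_integral_adjacent_intervals
      (a := a) (n := n) (f := g) (fun i hi => hg ⟨i, hi⟩)
    have h1 : (∑ i : Fin n, ∫ x in (a i.val)..(a (i.val + 1)), g x)
        = ∑ i ∈ Finset.range n, ∫ x in (a i)..(a (i + 1)), g x :=
      Fin.sum_univ_eq_sum_range (fun i => ∫ x in (a i)..(a (i + 1)), g x) n
    rw [h1, hsum, ha0]
    rw [intervalIntegral.integral_of_le (by positivity : (0:ℝ) ≤ a n)]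
    rw [MeasureTheory.integral_Icc_eq_integral_Ioc]
  have hint1 : ∀ i : Fin n, IntervalIntegrable (fun x => truncExpPiecewise h A m p x)
      volume (a i.val) (a (i.val + 1)) := by
    intro i
    rw [intervalIntegrable_iff_integrableOn_Ioc_of_le (hle i)]
    exact ((Continuous.integrableOn_Ioc (by fun_prop))).congr_fun
      (fun x hx => (hval i x hx).symm) measurableSet_Ioc
  have hval2 : ∀ (i : Fin n) (x : ℝ), x ∈ Set.Ioc (a i.val) (a (i.val + 1)) →
      truncExpPiecewise h A m p x * Real.log (truncExpPiecewise h A m p x)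
        = c i * Real.exp (-(r i * (x - a i.val))) * (Real.log (c i) - r i * (x - a i.val)) := by
    intro i x hx
    rw [hval i x hx]
    rw [Real.log_mul (hcpos i).ne' (Real.exp_pos _).ne', Real.log_exp]
    ring
  have hint2 : ∀ i : Fin n, IntervalIntegrable
      (fun x => truncExpPiecewise h A m p x * Real.log (truncExpPiecewise h A m p x))
      volume (a i.val) (a (i.val + 1)) := by
    intro i
    rw [intervalIntegrable_iff_integrableOn_Ioc_of_le (hle i)]
    exact ((Continuous.integrableOn_Ioc (by fun_prop))).congr_fun
      (fun x hx => (hval2 i x hx).symm) measurableSet_Ioc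
  -- compute each piece
  have hpiece1 : ∀ i : Fin n,
      (∫ x in (a i.val)..(a (i.val + 1)), truncExpPiecewise h A m p x) = p i := by
    intro i
    rw [intervalIntegral.integral_of_le (hle i),
      MeasureTheory.setIntegral_congr_fun measurableSet_Ioc (fun x hx => hval i x hx),
      ← intervalIntegral.integral_of_le (hle i), hstep i,
      ftc_exp (a i.val) (h i * A) (c i) (r i) (hrpos i).ne', hrL i, hcr i]
    field_simp
  have hpiece2 : ∀ i : Fin n,
      (∫ x in (a i.val)..(a (i.val + 1)),
          truncExpPiecewise h A m p x * Real.log (truncExpPiecewise h A m p x))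
        = p i * Real.log (c i) - p i + p i * (m * Real.exp (-m) / (1 - Real.exp (-m))) := by
    intro i
    rw [intervalIntegral.integral_of_le (hle i),
      MeasureTheory.setIntegral_congr_fun measurableSet_Ioc (fun x hx => hval2 i x hx),
      ← intervalIntegral.integral_of_le (hle i), hstep i,
      ftc_exp_mul (a i.val) (h i * A) (c i) (r i) (Real.log (c i)) (hrpos i).ne',
      hrL i, hcr i]
    field_simp
    ring
  -- log c i expansion
  have hlogc : ∀ i : Fin n, Real.log (c i)
      = Real.log (p i * sCum h n / h i) - Real.log (sCum h n * A)
        + Real.log (m / (1 - Real.exp (-m))) := by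
    intro i
    have hx1 : (0:ℝ) < p i * sCum h n / h i := div_pos (mul_pos (hppos i) hSpos) (hpos i)
    have hx2 : (0:ℝ) < sCum h n * A := mul_pos hSpos hA
    have hx3 : (0:ℝ) < m / (1 - Real.exp (-m)) := div_pos hm hem
    have hceq : c i = (p i * sCum h n / h i) / (sCum h n * A) * (m / (1 - Real.exp (-m))) := by
      simp only [hc]
      field_simp [hSpos.ne', (hpos i).ne', hA.ne', hem.ne']
    rw [hceq, Real.log_mul (div_pos hx1 hx2).ne' hx3.ne', Real.log_div hx1.ne' hx2.ne']
  constructor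
  · rw [hsplit _ hint1]
    simp only [hpiece1]
    exact hpsum
  · rw [hsplit _ hint2]
    simp only [hpiece2, hlogc]
    rw [Finset.sum_add_distrib, Finset.sum_sub_distrib, ← Finset.sum_mul, hpsum]
    have hexp : ∑ i : Fin n, p i * (Real.log (p i * sCum h n / h i) - Real.log (sCum h n * A)
        + Real.log (m / (1 - Real.exp (-m))))
      = (∑ i : Fin n, p i * Real.log (p i * sCum h n / h i))
        - Real.log (sCum h n * A) + Real.log (m / (1 - Real.exp (-m))) := by
      simp only [mul_sub, mul_add]
      rw [Finset.sum_add_distrib, Finset.sum_sub_distrib, ← Finset.sum_mul, ← Finset.sum_mul, hpsum]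
      ring
    rw [hexp]
    ring
end
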